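/- The polynomial invariant P is complete for rooted forests: two rooted forests F_1 and F_2 satisfy P_{F_1} = P_{F_2} if and only if F_1 and F_2 are isomorphic as rooted forests. -/

import Mathlib

open MvPolynomial

/-- A rooted tree: a root node together with a list of branches. -/
inductive RTree : Type
  | node : List RTree → RTree

/-- A rooted forest: a finite (possibly empty) list of rooted trees. -/
abbrev RForest : Type := List RTree

namespace RTree

/-- Number of vertices of a rooted tree. -/
def size : RTree → ℕ
  | .node ts => 1 + (ts.attach.map fun s => size s.1).sum

  decreasing_by
    all_goals
      simp only [RTree.node.sizeOf_spec]
      have := List.sizeOf_lt_of_mem s.2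
      omega

/-- Number of leaves of a rooted tree. -/
def leafCount : RTree → ℕ
  | .node [] => 1
  | .node (t :: ts) => ((t :: ts).attach.map fun s => leafCount s.1).sum

  decreasing_by
    all_goals
      simp only [RTree.node.sizeOf_spec]
      have := List.sizeOf_lt_of_mem s.2
      omega

/-- The bivariate generating polynomial `P_T(x,y)` of leaf-induced subtrees of `T`,
counted by number of vertices (`X 0`) and number of leaves (`X 1`). -/
noncomputable def Ptree : RTree → MvPolynomial (Fin 2) ℤ
  | .node [] => 1 + X 0 * X 1
  | .node (t :: ts) =>
      1 - X 0 + X 0 * ((t :: ts).attach.map fun s => Ptree s.1).prod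

  decreasing_by
    all_goals
      simp only [RTree.node.sizeOf_spec]
      have := List.sizeOf_lt_of_mem s.2
      omega

/-- The polynomial `p_T(x) = 1 - P_T(x,-1)`. -/
noncomputable def pPol (T : RTree) : Polynomial ℤ :=
  1 - MvPolynomial.aeval ![Polynomial.X, -1] (Ptree T)

/-- The bivariate generating polynomial `S_T(x,y)` of subtrees of `T` (empty or connected
containing the root), counted by vertices (`X 0`) and boundary vertices (`X 1`). -/
noncomputable def Stree : RTree → MvPolynomial (Fin 2) ℤ
  | .node ts => X 1 + X 0 * (ts.attach.map fun s => Stree s.1).prod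

  decreasing_by
    all_goals
      simp only [RTree.node.sizeOf_spec]
      have := List.sizeOf_lt_of_mem s.2
      omega

/-- The bivariate generating polynomial `A_T(x,y)` of admissible subtrees of `T`,
counted by vertices (`X 0`) and boundary vertices (`X 1`). -/
noncomputable def Atree : RTree → MvPolynomial (Fin 2) ℤ
  | .node [] => X 1
  | .node (t :: ts) =>
      X 1 + X 0 * ((t :: ts).attach.map fun s => Atree s.1).prod

  decreasing_by
    all_goals
      simp only [RTree.node.sizeOf_spec]
      have := List.sizeOf_lt_of_mem s.2
      omega

/-- The trivariate polynomial `M_T(x,y,z)` (with `x = X 0`, `y = X 1`, `z = X 2`). -/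
noncomputable def Mtree : RTree → MvPolynomial (Fin 3) ℤ
  | .node ts =>
      Polynomial.aeval (X 2) (pPol (.node ts)).divX +
        X 0 * ∑ i : Fin ts.length,
          Mtree (ts.get i) *
            ∏ j ∈ Finset.univ.erase i,
              MvPolynomial.rename Fin.castSucc (Atree (ts.get j))
  decreasing_by
    simp only [RTree.node.sizeOf_spec]
    have h : sizeOf (ts.get i) < sizeOf ts := List.sizeOf_lt_of_mem (by first | exact List.get_mem ts i | simp)
    omega

/-- Number of vertices in the stem of a rooted tree. -/
def stemCount : RTree → ℕ
  | .node [t] => 1 + stemCount t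
  | .node _ => 1

/-- Isomorphism of rooted trees. -/
def Iso : RTree → RTree → Prop
  | .node ts, .node us =>
      ∃ σ : Fin ts.length ≃ Fin us.length,
        ∀ i : Fin ts.length, Iso (ts.get i) (us.get (σ i))
  decreasing_by
    simp only [RTree.node.sizeOf_spec]
    have h : sizeOf (ts.get i) < sizeOf ts := List.sizeOf_lt_of_mem (by first | exact List.get_mem ts i | simp)
    omega

end RTree

namespace RForest

open RTree

/-- Number of vertices of a rooted forest. -/
def size (F : RForest) : ℕ := (F.map RTree.size).sum

/-- Number of leaves of a rooted forest. -/
def leafCount (F : RForest) : ℕ := (F.map RTree.leafCount).sum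

/-- The polynomial `P_F` of a rooted forest: product over components. -/
noncomputable def Pforest (F : RForest) : MvPolynomial (Fin 2) ℤ := (F.map Ptree).prod

/-- The polynomial `S_F` of a rooted forest: product over components. -/
noncomputable def Sforest (F : RForest) : MvPolynomial (Fin 2) ℤ := (F.map Stree).prod

/-- Number of vertices in the stem of a rooted forest (`0` unless the forest is a tree). -/
def stemCount : RForest → ℕ
  | [T] => RTree.stemCount T
  | _ => 0

/-- Isomorphism of rooted forests: a matching of the components by isomorphisms. -/
def Iso (F G : RForest) : Prop :=
  ∃ σ : Fin F.length ≃ Fin G.length,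
    ∀ i : Fin F.length, RTree.Iso (F.get i) (G.get (σ i))

end RForest

namespace RTree

theorem strongInd {P : RTree → Prop}
    (h : ∀ ts : List RTree, (∀ t ∈ ts, P t) → P (.node ts)) : ∀ t, P t
  | .node ts => h ts (fun t ht => strongInd h t)
  decreasing_by
    simp only [RTree.node.sizeOf_spec]
    have := List.sizeOf_lt_of_mem ht
    omega

lemma size_node (ts : List RTree) : size (.node ts) = 1 + (ts.map size).sum := by
  rw [size, List.attach_map_val]

lemma leafCount_nil : leafCount (.node []) = 1 := by rw [leafCount]

lemma leafCount_cons (t : RTree) (ts : List RTree) :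
    leafCount (.node (t :: ts)) = ((t :: ts).map leafCount).sum := by
  rw [leafCount, List.attach_map_val]

lemma Ptree_nil : Ptree (.node []) = 1 + X 0 * X 1 := by rw [Ptree]

lemma Ptree_cons (t : RTree) (ts : List RTree) :
    Ptree (.node (t :: ts)) = 1 - X 0 + X 0 * ((t :: ts).map Ptree).prod := by
  rw [Ptree, List.attach_map_val]

end RTree
lemma list_prod_pow {M : Type*} [Monoid M] (x : M) {α : Type*} (l : List α) (f : α → ℕ) :
    (l.map fun a => x ^ f a).prod = x ^ (l.map f).sum := by
  induction l with
  | nil => simp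
  | cons a l ih => simp [pow_add, ih]

namespace RTree

lemma size_pos (t : RTree) : 1 ≤ size t := by
  induction t using strongInd with
  | h ts _ => rw [size_node]; omega

lemma leafCount_pos (t : RTree) : 1 ≤ leafCount t := by
  induction t using strongInd with
  | h ts ih =>
    cases ts with
    | nil => rw [leafCount_nil]
    | cons t ts =>
      rw [leafCount_cons]
      have := ih t (by simp)
      simp only [List.map_cons, List.sum_cons]
      omega

lemma stem_nil : stemCount (.node []) = 1 := rfl

lemma stem_single (t : RTree) : stemCount (.node [t]) = 1 + stemCount t := rfl

lemma stem_big (t u : RTree) (ts : List RTree) : stemCount (.node (t :: u :: ts)) = 1 := rfl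

lemma stemCount_pos (t : RTree) : 1 ≤ stemCount t := by
  induction t using strongInd with
  | h ts ih =>
    match ts with
    | [] => rw [stem_nil]
    | [t] => rw [stem_single]; omega
    | t :: u :: ts => rw [stem_big]

/-- Evaluation at `x = 1`, `y = X - 1`. -/
lemma aeval_one_sub (T : RTree) :
    MvPolynomial.aeval ![(1 : Polynomial ℤ), Polynomial.X - 1] (Ptree T)
      = Polynomial.X ^ leafCount T := by
  induction T using strongInd with
  | h ts ih =>
    cases ts with
    | nil =>
      rw [Ptree_nil, leafCount_nil]
      simp [Matrix.cons_val_zero, Matrix.cons_val_one]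
    | cons t ts =>
      rw [Ptree_cons, leafCount_cons]
      rw [map_add, map_sub, map_mul, map_one, MvPolynomial.aeval_X, map_list_prod]
      rw [List.map_map]
      have : ((t :: ts).map (⇑(MvPolynomial.aeval ![(1 : Polynomial ℤ), Polynomial.X - 1]) ∘ Ptree)).prod
          = ((t :: ts).map fun a => Polynomial.X ^ leafCount a).prod := by
        apply congrArg
        apply List.map_congr_left
        intro a ha
        exact ih a ha
      rw [this, list_prod_pow]
      simp [Matrix.cons_val_zero]

lemma constantCoeff_Ptree (T : RTree) :
    MvPolynomial.constantCoeff (Ptree T) = 1 := by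
  induction T using strongInd with
  | h ts _ =>
    cases ts with
    | nil => rw [Ptree_nil]; simp
    | cons t ts =>
      rw [Ptree_cons]
      simp

/-- `hPol T = P_T(x, -1)`. -/
noncomputable def hPol (T : RTree) : Polynomial ℤ :=
  MvPolynomial.aeval ![Polynomial.X, -1] (Ptree T)

lemma hPol_nil : hPol (.node []) = 1 - Polynomial.X := by
  rw [hPol, Ptree_nil]
  simp [Matrix.cons_val_zero, Matrix.cons_val_one]
  ring

lemma hPol_cons (t : RTree) (ts : List RTree) :
    hPol (.node (t :: ts)) = 1 - Polynomial.X + Polynomial.X * ((t :: ts).map hPol).prod := by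
  rw [hPol, Ptree_cons]
  rw [map_add, map_sub, map_mul, map_one, MvPolynomial.aeval_X, map_list_prod, List.map_map]
  rfl

lemma hPol_eval_one (T : RTree) : (hPol T).eval 1 = 0 := by
  induction T using strongInd with
  | h ts ih =>
    cases ts with
    | nil => rw [hPol_nil]; simp
    | cons t ts =>
      rw [hPol_cons]
      simp only [Polynomial.eval_add, Polynomial.eval_sub, Polynomial.eval_one,
        Polynomial.eval_mul, Polynomial.eval_X, Polynomial.eval_list_prod, List.map_cons,
        List.map_map]
      have h0 : ((hPol t).eval 1) = 0 := ih t (by simp)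
      simp [Function.comp, h0]

lemma hPol_deriv_eval_one (T : RTree) :
    (Polynomial.derivative (hPol T)).eval 1 = -(stemCount T : ℤ) := by
  induction T using strongInd with
  | h ts ih =>
    match ts with
    | [] =>
      rw [hPol_nil, stem_nil]
      simp
    | [t] =>
      rw [hPol_cons, stem_single]
      simp only [List.map_cons, List.map_nil, List.prod_cons, List.prod_nil, mul_one]
      have h0 := hPol_eval_one t
      have h1 := ih t (by simp)
      simp [Polynomial.derivative_mul, h0, h1]
      push_cast
      ring
    | t :: u :: ts =>
      rw [hPol_cons, stem_big]
      have h0 := hPol_eval_one t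
      have h1 := hPol_eval_one u
      simp only [List.map_cons, List.prod_cons]
      simp [Polynomial.derivative_mul, h0, h1]

end RTree
namespace RTree
lemma hPol_eval_zero (T : RTree) : (hPol T).eval 0 = 1 := by
  induction T using strongInd with
  | h ts _ =>
    cases ts with
    | nil => rw [hPol_nil]; simp
    | cons t ts => rw [hPol_cons]; simp
end RTree
namespace RTree

/-- `x ↦ C X`, `y ↦ X - 1` into `ℤ[x][y]`. -/
noncomputable def toPP : MvPolynomial (Fin 2) ℤ →+* Polynomial (Polynomial ℤ) :=
  (MvPolynomial.aeval
    (![Polynomial.C Polynomial.X, Polynomial.X - 1] : Fin 2 → Polynomial (Polynomial ℤ))).toRingHom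

noncomputable def fromPP : Polynomial (Polynomial ℤ) →+* MvPolynomial (Fin 2) ℤ :=
  Polynomial.eval₂RingHom
    (Polynomial.eval₂RingHom (MvPolynomial.C) (MvPolynomial.X 0)) (MvPolynomial.X 1 + 1)

lemma toPP_X0 : toPP (X 0) = Polynomial.C Polynomial.X := by simp [toPP]

lemma toPP_X1 : toPP (X 1) = Polynomial.X - 1 := by simp [toPP]

lemma toPP_C (r : ℤ) : toPP (MvPolynomial.C r) = (r : Polynomial (Polynomial ℤ)) := by
  simp [toPP, MvPolynomial.aeval_C, algebraMap_int_eq, map_intCast]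

lemma fromPP_X : fromPP Polynomial.X = X 1 + 1 := by simp [fromPP]

lemma fromPP_CC (a : Polynomial ℤ) :
    fromPP (Polynomial.C a) = Polynomial.eval₂ (MvPolynomial.C) (MvPolynomial.X 0) a := by
  simp [fromPP]

noncomputable def ppEquiv : MvPolynomial (Fin 2) ℤ ≃+* Polynomial (Polynomial ℤ) := by
  refine RingEquiv.ofRingHom toPP fromPP ?_ ?_
  swap
  · refine MvPolynomial.ringHom_ext (fun r => ?_) (fun i => ?_)
    · simp [toPP_C, map_intCast (MvPolynomial.C : ℤ →+* MvPolynomial (Fin 2) ℤ) r]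
    · fin_cases i
      · simp [toPP_X0, fromPP_CC]
      · simp [toPP_X1, fromPP_X, toPP_C]
  · refine Polynomial.ringHom_ext (fun a => ?_) ?_
    · have : (toPP.comp fromPP).comp (Polynomial.C : Polynomial ℤ →+* Polynomial (Polynomial ℤ))
          = Polynomial.C := by
        refine Polynomial.ringHom_ext (fun r => ?_) ?_
        · simp [fromPP_CC, toPP_C, Polynomial.C_eq_intCast, map_intCast]
        · simp [fromPP_CC, toPP_X0]
      simpa using RingHom.congr_fun this a
    · simp [fromPP_X, toPP_X1]

lemma ppEquiv_apply (p : MvPolynomial (Fin 2) ℤ) : ppEquiv p = toPP p := rfl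

end RTree
lemma list_prod_info {R : Type*} [CommRing R] [IsDomain R] :
    ∀ l : List (Polynomial R), (∀ p ∈ l, p ≠ 0) →
      l.prod ≠ 0 ∧ l.prod.natDegree = (l.map Polynomial.natDegree).sum ∧
        l.prod.leadingCoeff = (l.map Polynomial.leadingCoeff).prod := by
  intro l
  induction l with
  | nil => simp
  | cons p l ih =>
    intro h
    have hp : p ≠ 0 := h p (by simp)
    obtain ⟨h0, h1, h2⟩ := ih (fun q hq => h q (by simp [hq]))
    refine ⟨mul_ne_zero hp h0, ?_, ?_⟩
    · simp [Polynomial.natDegree_mul hp h0, h1]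
    · simp [Polynomial.leadingCoeff_mul, h2]

namespace RTree

lemma toPP_Ptree_cons (t : RTree) (ts : List RTree) :
    toPP (Ptree (.node (t :: ts)))
      = 1 - Polynomial.C Polynomial.X
        + Polynomial.C Polynomial.X * ((t :: ts).map fun s => toPP (Ptree s)).prod := by
  rw [Ptree_cons, map_add, map_sub, map_one, map_mul, toPP_X0, map_list_prod, List.map_map]
  rfl

lemma toPP_Ptree_info (T : RTree) :
    (toPP (Ptree T)).natDegree = leafCount T ∧
      (toPP (Ptree T)).leadingCoeff = Polynomial.X ^ size T := by
  induction T using strongInd with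
  | h ts ih =>
    cases ts with
    | nil =>
      have he : toPP (Ptree (.node [])) =
          Polynomial.C Polynomial.X * Polynomial.X + Polynomial.C ((1 : Polynomial ℤ) - Polynomial.X) := by
        rw [Ptree_nil, map_add, map_one, map_mul, toPP_X0, toPP_X1, map_sub, map_one]
        ring
      rw [he, leafCount_nil, size_node]
      constructor
      · exact Polynomial.natDegree_linear Polynomial.X_ne_zero
      · rw [Polynomial.leadingCoeff_linear Polynomial.X_ne_zero]
        simp
    | cons t ts =>
      set l := ((t :: ts).map fun s => toPP (Ptree s)) with hl
      have hmem : ∀ p ∈ l, p ≠ 0 := by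
        intro p hp
        rw [hl, List.mem_map] at hp
        obtain ⟨s, hs, rfl⟩ := hp
        have := (ih s hs).2
        intro h0
        rw [h0] at this
        simp [Polynomial.leadingCoeff_zero] at this
        exact pow_ne_zero (size s) Polynomial.X_ne_zero this.symm
      obtain ⟨h0, h1, h2⟩ := list_prod_info l hmem
      have hdeg : l.prod.natDegree = ((t :: ts).map leafCount).sum := by
        rw [h1, hl, List.map_map]
        congr 1
        refine List.map_congr_left (fun s hs => ?_)
        exact (ih s hs).1
      have hlead : l.prod.leadingCoeff = Polynomial.X ^ ((t :: ts).map size).sum := by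
        rw [h2, hl, List.map_map]
        rw [show (List.map (Polynomial.leadingCoeff ∘ fun s => toPP (Ptree s)) (t :: ts))
            = (t :: ts).map fun s => Polynomial.X ^ size s from
          List.map_congr_left (fun s hs => (ih s hs).2)]
        exact list_prod_pow _ _ _
      have hLpos : 0 < l.prod.natDegree := by
        rw [hdeg]
        have := leafCount_pos t
        simp only [List.map_cons, List.sum_cons]
        omega
      have hq0 : Polynomial.C Polynomial.X * l.prod ≠ 0 :=
        mul_ne_zero (by simp [Polynomial.X_ne_zero]) h0
      have hqdeg : (Polynomial.C Polynomial.X * l.prod).natDegree = l.prod.natDegree := by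
        rw [Polynomial.natDegree_mul (by simp [Polynomial.X_ne_zero]) h0]
        simp
      have hdlt : (Polynomial.C ((1 : Polynomial ℤ) - Polynomial.X)).degree
          < (Polynomial.C Polynomial.X * l.prod).degree := by
        refine lt_of_le_of_lt Polynomial.degree_C_le ?_
        refine Polynomial.natDegree_pos_iff_degree_pos.mp ?_
        rw [hqdeg]
        exact hLpos
      have he : toPP (Ptree (.node (t :: ts)))
          = Polynomial.C ((1 : Polynomial ℤ) - Polynomial.X) + Polynomial.C Polynomial.X * l.prod := by
        rw [toPP_Ptree_cons, map_sub, map_one]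
      rw [he]
      constructor
      · rw [Polynomial.natDegree_eq_of_degree_eq (Polynomial.degree_add_eq_right_of_degree_lt hdlt),
          hqdeg, hdeg, leafCount_cons]
      · rw [Polynomial.leadingCoeff_add_of_degree_lt hdlt, Polynomial.leadingCoeff_mul, hlead,
          size_node]
        simp [pow_add, pow_succ]

end RTree
namespace RTree

lemma map_eval1_toPP (p : MvPolynomial (Fin 2) ℤ) :
    (toPP p).map (Polynomial.evalRingHom 1)
      = MvPolynomial.aeval (![1, Polynomial.X - 1] : Fin 2 → Polynomial ℤ) p := by
  have h : (Polynomial.mapRingHom (Polynomial.evalRingHom 1)).comp toPP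
      = (MvPolynomial.aeval (![1, Polynomial.X - 1] : Fin 2 → Polynomial ℤ)).toRingHom := by
    refine MvPolynomial.ringHom_ext (fun r => ?_) (fun i => ?_)
    · simp [toPP_C, MvPolynomial.aeval_C, algebraMap_int_eq, map_intCast]
    · fin_cases i
      · simp [toPP_X0]
      · simp [toPP_X1]
  exact RingHom.congr_fun h p

lemma coeffZero_toPP (p : MvPolynomial (Fin 2) ℤ) :
    (toPP p).coeff 0 = MvPolynomial.aeval (![Polynomial.X, -1] : Fin 2 → Polynomial ℤ) p := by
  rw [Polynomial.coeff_zero_eq_eval_zero]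
  have h : (Polynomial.evalRingHom 0).comp toPP
      = (MvPolynomial.aeval (![Polynomial.X, -1] : Fin 2 → Polynomial ℤ)).toRingHom := by
    refine MvPolynomial.ringHom_ext (fun r => ?_) (fun i => ?_)
    · simp [toPP_C, MvPolynomial.aeval_C, algebraMap_int_eq, map_intCast]
    · fin_cases i
      · simp [toPP_X0]
      · simp [toPP_X1]
  exact RingHom.congr_fun h p

lemma map_eval1_toPP_Ptree (T : RTree) :
    (toPP (Ptree T)).map (Polynomial.evalRingHom 1) = Polynomial.X ^ leafCount T := by
  rw [map_eval1_toPP]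
  exact aeval_one_sub T

lemma coeffZero_toPP_Ptree (T : RTree) : (toPP (Ptree T)).coeff 0 = hPol T := by
  rw [coeffZero_toPP]; rfl

lemma hPol_not_sq_dvd (T : RTree) :
    ¬ (Polynomial.X - Polynomial.C (1 : ℤ)) ^ 2 ∣ hPol T := by
  rintro ⟨q, hq⟩
  have hd := hPol_deriv_eval_one T
  rw [hq] at hd
  simp only [Polynomial.derivative_mul, Polynomial.derivative_pow, Polynomial.derivative_sub,
    Polynomial.derivative_X, Polynomial.derivative_C, sub_zero, mul_one] at hd
  simp only [Polynomial.eval_add, Polynomial.eval_mul, Polynomial.eval_pow,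
    Polynomial.eval_sub, Polynomial.eval_X, Polynomial.eval_C, sub_self] at hd
  norm_num at hd
  have := stemCount_pos T
  omega
  
theorem Ptree_irreducible (T : RTree) : Irreducible (Ptree T) := by
  rw [← MulEquiv.irreducible_iff ppEquiv]
  rw [ppEquiv_apply]
  set g := toPP (Ptree T) with hg
  obtain ⟨hdeg, hlead⟩ := toPP_Ptree_info T
  have hg0 : g ≠ 0 := by
    intro h
    rw [hg] at h
    have : ((0:Polynomial (Polynomial ℤ))).leadingCoeff = 0 := Polynomial.leadingCoeff_zero
    rw [h, this] at hlead
    exact pow_ne_zero (size T) (Polynomial.X_ne_zero (R := ℤ)) hlead.symm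
  have hdegree : g.degree = (leafCount T : WithBot ℕ) := by
    rw [Polynomial.degree_eq_natDegree hg0, hdeg]
  refine Polynomial.irreducible_of_eisenstein_criterion
    (P := Ideal.span {(Polynomial.X - Polynomial.C (1 : ℤ))}) ?_ ?_ ?_ ?_ ?_ ?_
  · exact (Ideal.span_singleton_prime (Polynomial.X_sub_C_ne_zero 1)).mpr
      (Polynomial.prime_X_sub_C 1)
  · rw [hlead, Ideal.mem_span_singleton]
    intro hdvd
    have := Polynomial.eval_dvd (x := (1 : ℤ)) hdvd
    simp at this
  · intro n hn
    rw [Ideal.mem_span_singleton, Polynomial.dvd_iff_isRoot, Polynomial.IsRoot]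
    have : (g.map (Polynomial.evalRingHom 1)).coeff n = Polynomial.eval 1 (g.coeff n) := by
      simp [Polynomial.coeff_map]
    rw [← this, map_eval1_toPP_Ptree T]
    have hnL : n < leafCount T := by
      rw [hdegree] at hn
      exact_mod_cast hn
    simp [Polynomial.coeff_X_pow, Nat.ne_of_lt hnL]
  · rw [hdegree]
    have := leafCount_pos T
    exact_mod_cast Nat.pos_of_ne_zero (by omega)
  · rw [Ideal.span_singleton_pow, Ideal.mem_span_singleton, coeffZero_toPP_Ptree]
    exact hPol_not_sq_dvd T
  · intro r hr
    rw [Polynomial.C_dvd_iff_dvd_coeff] at hr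
    have h1 : r ∣ Polynomial.X ^ size T := by
      have := hr (leafCount T)
      rwa [← hdeg, ← Polynomial.leadingCoeff, hlead] at this
    have h2 : r ∣ hPol T := by
      have := hr 0
      rwa [coeffZero_toPP_Ptree] at this
    obtain ⟨i, _, hi⟩ := (dvd_prime_pow Polynomial.prime_X (size T)).mp h1
    rcases hi.symm with ⟨u, hu⟩
    by_cases hi0 : i = 0
    · subst hi0
      rw [pow_zero, one_mul] at hu
      exact hu ▸ u.isUnit
    · exfalso
      have hev : Polynomial.eval 0 r = 0 := by
        rw [← hu]
        simp [Polynomial.eval_pow, zero_pow hi0]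
      have : Polynomial.eval 0 r ∣ Polynomial.eval 0 (hPol T) := Polynomial.eval_dvd h2
      rw [hev, hPol_eval_zero T] at this
      exact one_ne_zero (eq_zero_of_zero_dvd this)

end RTree
namespace RTree

lemma ppEquiv_symm_apply (q : Polynomial (Polynomial ℤ)) : ppEquiv.symm q = fromPP q := rfl

lemma unit_eq_one (u : MvPolynomial (Fin 2) ℤ) (hu : IsUnit u)
    (hc : MvPolynomial.constantCoeff u = 1) : u = 1 := by
  have h1 : IsUnit (ppEquiv u) := hu.map ppEquiv
  rw [Polynomial.isUnit_iff] at h1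
  obtain ⟨r, hr, hru⟩ := h1
  rw [Polynomial.isUnit_iff] at hr
  obtain ⟨m, _, hmr⟩ := hr
  have hu2 : u = MvPolynomial.C m := by
    have h2 : ppEquiv u = Polynomial.C (Polynomial.C m) := by rw [hmr, hru]
    have h3 := congrArg ppEquiv.symm h2
    rw [RingEquiv.symm_apply_apply, ppEquiv_symm_apply, fromPP_CC, Polynomial.eval₂_C] at h3
    exact h3
  rw [hu2] at hc ⊢
  rw [MvPolynomial.constantCoeff_C] at hc
  rw [hc, map_one]

lemma Ptree_assoc_eq {T U : RTree} (h : Associated (Ptree T) (Ptree U)) :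
    Ptree T = Ptree U := by
  obtain ⟨u, hu⟩ := h
  have hc : MvPolynomial.constantCoeff (u : MvPolynomial (Fin 2) ℤ) = 1 := by
    have h2 := congrArg MvPolynomial.constantCoeff hu
    rw [map_mul, constantCoeff_Ptree, constantCoeff_Ptree, one_mul] at h2
    exact h2
  rw [unit_eq_one u u.isUnit hc, mul_one] at hu
  exact hu

lemma size_eq_of_Ptree_eq {T U : RTree} (h : Ptree T = Ptree U) : size T = size U := by
  have h1 := (toPP_Ptree_info T).2
  have h2 := (toPP_Ptree_info U).2
  rw [h, h2] at h1
  have := congrArg Polynomial.natDegree h1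
  simpa [Polynomial.natDegree_X_pow] using this.symm

end RTree

section ListEquiv

open List

lemma exists_equiv_of_perm {α : Type*} {l₁ l₂ : List α} (h : l₁ ~ l₂) :
    ∃ σ : Fin l₁.length ≃ Fin l₂.length, ∀ i, l₂.get (σ i) = l₁.get i := by
  induction h with
  | nil => exact ⟨Equiv.refl _, fun i => i.elim0⟩
  | @cons x l₁ l₂ h ih =>
    obtain ⟨σ, hσ⟩ := ih
    refine ⟨(finSuccEquiv l₁.length).trans
      ((Equiv.optionCongr σ).trans (finSuccEquiv l₂.length).symm), fun i => ?_⟩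
    refine Fin.cases ?_ (fun j => ?_) i
    · rfl
    · exact hσ j
  | swap x y l =>
    refine ⟨Equiv.swap ⟨0, by simp⟩ ⟨1, by simp⟩, fun i => ?_⟩
    rcases i with ⟨n, hn⟩
    match n, hn with
    | 0, hn => rfl
    | 1, hn => rfl
    | n+2, hn => rfl
  | trans h₁ h₂ ih₁ ih₂ =>
    obtain ⟨σ₁, hσ₁⟩ := ih₁
    obtain ⟨σ₂, hσ₂⟩ := ih₂
    exact ⟨σ₁.trans σ₂, fun i => by rw [Equiv.trans_apply, hσ₂, hσ₁]⟩

lemma multiset_rel_exists_perm {α β : Type*} (r : α → β → Prop) :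
    ∀ (l₁ : List α) (l₂ : List β), Multiset.Rel r ↑l₁ ↑l₂ →
      ∃ l₃ : List β, l₃ ~ l₂ ∧ List.Forall₂ r l₁ l₃ := by
  intro l₁
  induction l₁ with
  | nil =>
    intro l₂ h
    have h0 : (l₂ : Multiset β) = 0 := by
      rw [show ((([] : List α) : Multiset α)) = 0 from rfl] at h
      exact Multiset.rel_zero_left.mp h
    have : l₂ = [] := (Multiset.coe_eq_zero l₂).mp h0
    exact ⟨[], by simp [this], List.Forall₂.nil⟩
  | cons a l ih =>
    intro l₂ h
    rw [show ((a :: l : List α) : Multiset α) = a ::ₘ ↑l from rfl, Multiset.rel_cons_left] at h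
    obtain ⟨b, bs, hab, hrel, hbs⟩ := h
    obtain ⟨lb, hlb⟩ := Quot.exists_rep bs
    have hbs' : (l₂ : Multiset β) = ↑(b :: lb) := by
      rw [hbs, ← hlb]; rfl
    have hperm : l₂ ~ b :: lb := Multiset.coe_eq_coe.mp hbs'
    have hrel' : Multiset.Rel r ↑l ↑lb := by
      rw [show ((lb : List β) : Multiset β) = bs from hlb]
      exact hrel
    obtain ⟨l₃, hl₃, hf⟩ := ih lb hrel'
    exact ⟨b :: l₃, (List.Perm.cons b hl₃).trans hperm.symm, List.Forall₂.cons hab hf⟩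

lemma rel_bridge {α β : Type*} {r : α → β → Prop} {l₁ : List α} {l₂ : List β}
    (h : Multiset.Rel r ↑l₁ ↑l₂) :
    ∃ σ : Fin l₁.length ≃ Fin l₂.length, ∀ i, r (l₁.get i) (l₂.get (σ i)) := by
  obtain ⟨l₃, hperm, hf⟩ := multiset_rel_exists_perm r l₁ l₂ h
  obtain ⟨hlen, hpt⟩ := List.forall₂_iff_get.mp hf
  obtain ⟨τ, hτ⟩ := exists_equiv_of_perm hperm
  refine ⟨(finCongr hlen).trans τ, fun i => ?_⟩
  rw [Equiv.trans_apply, hτ]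
  exact hpt i.1 i.2 (by omega)

lemma multiset_rel_mono' {α β : Type*} {r p : α → β → Prop} {s : Multiset α} {t : Multiset β}
    (h : Multiset.Rel r s t) (H : ∀ a ∈ s, ∀ b ∈ t, r a b → p a b) : Multiset.Rel p s t := by
  induction h with
  | zero => exact Multiset.Rel.zero
  | @cons a b as bs hab hrel ih =>
    exact Multiset.Rel.cons (H a (Multiset.mem_cons_self a as) b (Multiset.mem_cons_self b bs) hab)
      (ih fun x hx y hy hxy => H x (Multiset.mem_cons_of_mem hx) y (Multiset.mem_cons_of_mem hy) hxy)

lemma list_map_prod_fin {α M : Type*} [CommMonoid M] (l : List α) (f : α → M) :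
    (l.map f).prod = ∏ i : Fin l.length, f (l.get i) := by
  conv_lhs => rw [← List.ofFn_get l]
  rw [List.map_ofFn, List.prod_ofFn]
  rfl

end ListEquiv
namespace RTree

lemma iso_def (ts us : List RTree) : Iso (.node ts) (.node us) ↔
    ∃ σ : Fin ts.length ≃ Fin us.length,
      ∀ i : Fin ts.length, Iso (ts.get i) (us.get (σ i)) := by
  rw [RTree.Iso]

lemma prods_to_rel (l₁ l₂ : List RTree)
    (h : (l₁.map Ptree).prod = (l₂.map Ptree).prod) :
    Multiset.Rel (fun a b => Associated (Ptree a) (Ptree b))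
      (↑l₁ : Multiset RTree) ↑l₂ := by
  have hrel : Multiset.Rel Associated (↑(l₁.map Ptree) : Multiset (MvPolynomial (Fin 2) ℤ))
      ↑(l₂.map Ptree) := by
    apply UniqueFactorizationMonoid.factors_unique
    · intro x hx
      rw [Multiset.mem_coe, List.mem_map] at hx
      obtain ⟨s, _, rfl⟩ := hx
      exact Ptree_irreducible s
    · intro x hx
      rw [Multiset.mem_coe, List.mem_map] at hx
      obtain ⟨s, _, rfl⟩ := hx
      exact Ptree_irreducible s
    · rw [Multiset.prod_coe, Multiset.prod_coe, h]
      exact Associated.refl _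
  rw [← Multiset.map_coe, ← Multiset.map_coe, Multiset.rel_map] at hrel
  exact hrel

theorem Ptree_inj : ∀ T U : RTree, Ptree T = Ptree U → Iso T U := by
  have main : ∀ T : RTree, (∀ U : RTree, Ptree T = Ptree U → Iso T U) := by
    intro T
    induction T using strongInd with
    | h ts ih =>
      intro U hPU
      obtain ⟨us⟩ := U
      rw [iso_def]
      have hsz := size_eq_of_Ptree_eq hPU
      cases ts with
      | nil =>
        cases us with
        | nil => exact ⟨Equiv.refl _, fun i => i.elim0⟩
        | cons u us =>
          exfalso
          rw [size_node, size_node] at hsz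
          have := size_pos u
          simp only [List.map_nil, List.sum_nil, List.map_cons, List.sum_cons] at hsz
          omega
      | cons t ts' =>
        cases us with
        | nil =>
          exfalso
          rw [size_node, size_node] at hsz
          have := size_pos t
          simp only [List.map_nil, List.sum_nil, List.map_cons, List.sum_cons] at hsz
          omega
        | cons u us' =>
          rw [Ptree_cons, Ptree_cons] at hPU
          have hprod : ((t :: ts').map Ptree).prod = ((u :: us').map Ptree).prod :=
            mul_left_cancel₀ (MvPolynomial.X_ne_zero (R := ℤ) (0 : Fin 2))
              (add_left_cancel hPU)
          have hrel2 := prods_to_rel _ _ hprod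
          have hrel3 : Multiset.Rel Iso (↑(t :: ts') : Multiset RTree) ↑(u :: us') :=
            multiset_rel_mono' hrel2
              (fun a ha _ _ hab => ih a (Multiset.mem_coe.mp ha) _ (Ptree_assoc_eq hab))
          exact rel_bridge hrel3
  exact fun T U => main T U

theorem Ptree_eq_of_iso : ∀ T U : RTree, Iso T U → Ptree T = Ptree U := by
  have main : ∀ T : RTree, (∀ U : RTree, Iso T U → Ptree T = Ptree U) := by
    intro T
    induction T using strongInd with
    | h ts ih =>
      intro U hI
      obtain ⟨us⟩ := U
      rw [iso_def] at hI
      obtain ⟨σ, hσ⟩ := hI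
      have hlen : ts.length = us.length := by
        have := Fintype.card_congr σ
        simpa using this
      cases ts with
      | nil =>
        cases us with
        | nil => rfl
        | cons u us => simp at hlen
      | cons t ts' =>
        cases us with
        | nil => simp at hlen
        | cons u us' =>
          rw [Ptree_cons, Ptree_cons]
          have hp : ((t :: ts').map Ptree).prod = ((u :: us').map Ptree).prod := by
            rw [list_map_prod_fin, list_map_prod_fin,
              ← Equiv.prod_comp σ (fun j => Ptree ((u :: us').get j))]
            exact Finset.prod_congr rfl
              (fun i _ => ih _ (List.get_mem _ _) _ (hσ i))
          rw [hp]
  exact fun T U => main T U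

end RTree
theorem stmt12 (F₁ F₂ : RForest) :
    RForest.Pforest F₁ = RForest.Pforest F₂ ↔ RForest.Iso F₁ F₂ := by
  constructor
  · intro h
    rw [RForest.Pforest, RForest.Pforest] at h
    have hrel2 := RTree.prods_to_rel _ _ h
    have hrel3 : Multiset.Rel RTree.Iso (↑F₁ : Multiset RTree) ↑F₂ :=
      multiset_rel_mono' hrel2
        (fun a _ b _ hab => RTree.Ptree_inj a b (RTree.Ptree_assoc_eq hab))
    exact rel_bridge hrel3
  · rintro ⟨σ, hσ⟩
    rw [RForest.Pforest, RForest.Pforest, list_map_prod_fin, list_map_prod_fin,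
      ← Equiv.prod_comp σ (fun j => RTree.Ptree (F₂.get j))]
    exact Finset.prod_congr rfl fun i _ => RTree.Ptree_eq_of_iso _ _ (hσ i)
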